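/- For every positive integer m, every real number a, every natural number n, and every real number x, the noncentral Tanny-Dowling polynomial is given by the Laplace-type integral F̃_{m,a}(n;x) = ∫_{0}^{∞} D̃_{m,a}(n; x·λ) · e^{-λ} dλ. -/

import Mathlib

open Finset MeasureTheory

/-- Noncentral Whitney numbers of the second kind:
`W̃_{m,a}(n,k) = (1/(m^k k!)) Σ_{j=0}^{k} (-1)^{k-j} C(k,j) (m j - a)^n`. -/
noncomputable def ncWhitney (m : ℕ) (a : ℝ) (n k : ℕ) : ℝ :=
  (1 / ((m : ℝ) ^ k * (Nat.factorial k : ℝ))) *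
    ∑ j ∈ Finset.range (k + 1),
      (-1 : ℝ) ^ (k - j) * (Nat.choose k j : ℝ) * ((m : ℝ) * (j : ℝ) - a) ^ n

/-- Noncentral Tanny-Dowling polynomials:
`F̃_{m,a}(n;x) = Σ_{k=0}^{n} k! W̃_{m,a}(n,k) x^k`. -/
noncomputable def ncTannyDowling (m : ℕ) (a : ℝ) (n : ℕ) (x : ℝ) : ℝ :=
  ∑ k ∈ Finset.range (n + 1), (Nat.factorial k : ℝ) * ncWhitney m a n k * x ^ k

/-- Noncentral Dowling polynomials:
`D̃_{m,a}(n;x) = Σ_{k=0}^{n} W̃_{m,a}(n,k) x^k`. -/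
noncomputable def ncDowling (m : ℕ) (a : ℝ) (n : ℕ) (x : ℝ) : ℝ :=
  ∑ k ∈ Finset.range (n + 1), ncWhitney m a n k * x ^ k

lemma integrableOn_pow_mul_exp_neg (k : ℕ) :
    IntegrableOn (fun l : ℝ => l ^ k * Real.exp (-l)) (Set.Ioi 0) := by
  have h := Real.GammaIntegral_convergent (s := (k : ℝ) + 1) (by positivity)
  refine h.congr_fun (fun x hx => ?_) measurableSet_Ioi
  rw [add_sub_cancel_right]
  dsimp only
  rw [Real.rpow_natCast, mul_comm]

lemma integral_pow_mul_exp_neg (k : ℕ) :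
    ∫ l in Set.Ioi (0 : ℝ), l ^ k * Real.exp (-l) = (Nat.factorial k : ℝ) := by
  have h := Real.Gamma_eq_integral (s := (k : ℝ) + 1) (by positivity)
  rw [Real.Gamma_nat_eq_factorial] at h
  rw [← h.symm]
  refine setIntegral_congr_fun measurableSet_Ioi (fun x hx => ?_)
  rw [add_sub_cancel_right, Real.rpow_natCast, mul_comm]

/-- `F̃_{m,a}(n;x) = ∫_0^∞ D̃_{m,a}(n; xλ) e^{-λ} dλ`. -/
theorem ncTannyDowling_eq_integral_ncDowling (m : ℕ) (hm : 0 < m) (a : ℝ) (n : ℕ) (x : ℝ) :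
    ncTannyDowling m a n x =
      ∫ l in Set.Ioi (0 : ℝ), ncDowling m a n (x * l) * Real.exp (-l) := by
  unfold ncTannyDowling ncDowling
  have hint : ∀ k : ℕ, IntegrableOn
      (fun l : ℝ => ncWhitney m a n k * (x * l) ^ k * Real.exp (-l)) (Set.Ioi 0) := by
    intro k
    have : IntegrableOn (fun l : ℝ => (ncWhitney m a n k * x ^ k) * (l ^ k * Real.exp (-l)))
        (Set.Ioi 0) :=
      (integrableOn_pow_mul_exp_neg k).const_mul (ncWhitney m a n k * x ^ k)
    refine this.congr_fun (fun l _ => ?_) measurableSet_Ioi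
    ring
  calc ∑ k ∈ Finset.range (n + 1), (Nat.factorial k : ℝ) * ncWhitney m a n k * x ^ k
      = ∑ k ∈ Finset.range (n + 1),
        ∫ l in Set.Ioi (0 : ℝ), ncWhitney m a n k * (x * l) ^ k * Real.exp (-l) := by
        refine Finset.sum_congr rfl (fun k _ => ?_)
        have : ∀ l : ℝ, ncWhitney m a n k * (x * l) ^ k * Real.exp (-l)
            = (ncWhitney m a n k * x ^ k) * (l ^ k * Real.exp (-l)) := fun l => by ring
        simp_rw [this, integral_const_mul, integral_pow_mul_exp_neg]
        ring
    _ = ∫ l in Set.Ioi (0 : ℝ),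
        ∑ k ∈ Finset.range (n + 1), ncWhitney m a n k * (x * l) ^ k * Real.exp (-l) := by
        rw [← integral_finset_sum _ (fun k _ => hint k)]
    _ = ∫ l in Set.Ioi (0 : ℝ),
        (∑ k ∈ Finset.range (n + 1), ncWhitney m a n k * (x * l) ^ k) * Real.exp (-l) := by
        simp_rw [Finset.sum_mul]
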